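/- Let α be a finite type, N ≥ 1 a natural number, and W a set of functions n : α → ℕ with ∑_a n(a) = N. Define F : (α → ℝ) → ℝ by F(π) = ∑_{n ∈ W} (N! / ∏_a n(a)!) · ∏_a π(a)^{n(a)}. Then for every k ∈ α and every π : α → ℝ, the partial derivative of F with respect to the coordinate π(k) equals N · ∑_{m} ((N−1)! / ∏_a m(a)!) · ∏_a π(a)^{m(a)}, where the sum is over all m : α → ℕ with ∑_a m(a) = N − 1 and m + e_k ∈ W, and e_k is the indicator function of k. (The sensitivity of an aggregation strategy's success probability to candidate k equals N times the multinomial probability of winning given that one of the N draws is forced to be candidate k.) -/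

import Mathlib

/-- Multinomial gradient identity: the partial derivative of the multinomial success
probability `F(π) = ∑_{n ∈ W} (N!/∏ n(a)!) ∏ π(a)^(n(a))` with respect to the coordinate
`π(k)` equals `N` times the multinomial `(N-1)`-sample probability of the configurations
`m` with `m + e_k ∈ W`. -/
theorem multinomial_gradient_identity {α : Type*} [Fintype α] [DecidableEq α]
    (N : ℕ) (hN : 1 ≤ N) (W : Finset (α → ℕ)) (hW : ∀ n ∈ W, ∑ a, n a = N)
    (k : α) (π : α → ℝ) :
    HasDerivAt
      (fun t : ℝ => ∑ n ∈ W,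
        ((N.factorial : ℝ) / ∏ a, ((n a).factorial : ℝ)) *
          ∏ a, Function.update π k t a ^ n a)
      ((N : ℝ) * ∑ m ∈ (Fintype.piFinset fun _ : α => Finset.range N).filter
          (fun m => (∑ a, m a) = N - 1 ∧ (fun a => m a + if a = k then 1 else 0) ∈ W),
        (((N - 1).factorial : ℝ) / ∏ a, ((m a).factorial : ℝ)) * ∏ a, π a ^ m a)
      (π k) := by
  have key : ∀ n : α → ℕ, HasDerivAt
      (fun t : ℝ => ((N.factorial : ℝ) / ∏ a, ((n a).factorial : ℝ)) *
          ∏ a, Function.update π k t a ^ n a)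
      (((N.factorial : ℝ) / ∏ a, ((n a).factorial : ℝ)) *
        (((n k : ℝ) * π k ^ (n k - 1)) * ∏ a ∈ Finset.univ.erase k, π a ^ n a))
      (π k) := by
    intro n
    have hprod : ∀ t : ℝ, ∏ a, Function.update π k t a ^ n a
        = t ^ n k * ∏ a ∈ Finset.univ.erase k, π a ^ n a := by
      intro t
      have h1 : (fun a => Function.update π k t a ^ n a)
          = Function.update (fun a => π a ^ n a) k (t ^ n k) := by
        funext a
        by_cases h : a = k <;> simp [h, Function.update]
      rw [h1, Finset.prod_update_of_mem (Finset.mem_univ k),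
        Finset.sdiff_singleton_eq_erase]
    simp only [hprod]
    exact ((hasDerivAt_pow (n k) (π k)).mul_const _).const_mul _
  have hsum := HasDerivAt.fun_sum (fun n (_ : n ∈ W) => key n)
  refine hsum.congr_deriv (Eq.symm ?_)
  -- equality of derivative values
  rw [Finset.mul_sum]
  rw [← Finset.sum_filter_of_ne
    (p := fun n => 1 ≤ n k) (s := W)
    (f := fun n => ((N.factorial : ℝ) / ∏ a, ((n a).factorial : ℝ)) *
        (((n k : ℝ) * π k ^ (n k - 1)) * ∏ a ∈ Finset.univ.erase k, π a ^ n a))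
    (by
      intro n _ hne
      by_contra h
      apply hne
      have : n k = 0 := by omega
      simp [this])]
  refine Finset.sum_nbij' (fun m => fun a => m a + if a = k then 1 else 0)
    (fun n => fun a => n a - if a = k then 1 else 0) ?_ ?_ ?_ ?_ ?_
  · intro m hm
    simp only [Finset.mem_filter] at hm ⊢
    obtain ⟨_, _, hmem⟩ := hm
    exact ⟨hmem, by simp⟩
  · intro n hn
    simp only [Finset.mem_filter, Fintype.mem_piFinset, Finset.mem_range] at hn ⊢
    obtain ⟨hnW, hnk⟩ := hn
    have hsumn := hW n hnW
    have h2 : (∑ a ∈ Finset.univ.erase k, n a) + n k = N := by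
      rw [Finset.sum_erase_add _ _ (Finset.mem_univ k), hsumn]
    refine ⟨fun a => ?_, ?_, ?_⟩
    · by_cases h : a = k
      · subst h; simp; omega
      · have ha : n a ≤ ∑ b ∈ Finset.univ.erase k, n b :=
          Finset.single_le_sum (f := n) (fun _ _ => Nat.zero_le _)
            (Finset.mem_erase.mpr ⟨h, Finset.mem_univ a⟩)
        simp [h]; omega
    · have h1 : ∑ a, (n a - if a = k then 1 else 0)
          = (∑ a ∈ Finset.univ.erase k, n a) + (n k - 1) := by
        rw [← Finset.sum_erase_add _ _ (Finset.mem_univ k)]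
        simp only [if_pos rfl]
        congr 1
        exact Finset.sum_congr rfl fun a ha => by simp [Finset.ne_of_mem_erase ha]
      omega
    · convert hnW using 1
      funext a
      by_cases h : a = k <;> simp [h] <;> omega
  · intro m _
    funext a
    by_cases h : a = k <;> simp [h]
  · intro n hn
    simp only [Finset.mem_filter] at hn
    funext a
    by_cases h : a = k <;> simp [h] <;> omega
  · intro m hm
    simp only [Finset.mem_filter, Fintype.mem_piFinset, Finset.mem_range] at hm
    obtain ⟨hrange, hsum1, hmem⟩ := hm
    have e1 : ∏ a, ((((fun a => m a + if a = k then 1 else 0) : α → ℕ) a).factorial : ℝ)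
        = ((m k + 1).factorial : ℝ) * ∏ a ∈ Finset.univ.erase k, ((m a).factorial : ℝ) := by
      rw [← Finset.mul_prod_erase Finset.univ
        (fun a => ((((fun a => m a + if a = k then 1 else 0) : α → ℕ) a).factorial : ℝ))
        (Finset.mem_univ k)]
      congr 1
      · simp
      · exact Finset.prod_congr rfl fun a ha => by simp [Finset.ne_of_mem_erase ha]
    have e2 : ∏ a, π a ^ m a = π k ^ m k * ∏ a ∈ Finset.univ.erase k, π a ^ m a :=
      (Finset.mul_prod_erase _ _ (Finset.mem_univ k)).symm
    have e3 : ∏ a ∈ Finset.univ.erase k,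
          π a ^ (((fun a => m a + if a = k then 1 else 0) : α → ℕ) a)
        = ∏ a ∈ Finset.univ.erase k, π a ^ m a :=
      Finset.prod_congr rfl fun a ha => by simp [Finset.ne_of_mem_erase ha]
    have e4 : (((fun a => m a + if a = k then 1 else 0) : α → ℕ) k) = m k + 1 := by simp
    have hNfac : (N.factorial : ℝ) = (N : ℝ) * ((N - 1).factorial : ℝ) := by
      rw [← Nat.mul_factorial_pred (by omega : N ≠ 0)]
      push_cast
      ring
    have hfac1 : ((m k + 1).factorial : ℝ) = ((m k : ℝ) + 1) * ((m k).factorial : ℝ) := by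
      rw [Nat.factorial_succ]; push_cast; ring
    have hP : (∏ a ∈ Finset.univ.erase k, ((m a).factorial : ℝ)) ≠ 0 :=
      Finset.prod_ne_zero_iff.mpr fun a _ =>
        Nat.cast_ne_zero.mpr (Nat.factorial_ne_zero _)
    have hmk : ((m k).factorial : ℝ) ≠ 0 := Nat.cast_ne_zero.mpr (Nat.factorial_ne_zero _)
    have hmk1 : ((m k : ℝ) + 1) ≠ 0 := by positivity
    simp only [e1, e2, e3, e4, hNfac, hfac1, Nat.add_sub_cancel]
    rw [← Finset.mul_prod_erase Finset.univ (fun a => ((m a).factorial : ℝ)) (Finset.mem_univ k)]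
    push_cast
    field_simp
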